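/- A consequence relation ⊢ on a sentential language is substitution-invariant, monotonic and transitive if and only if it has a strong intersective q-mixed semantics, i.e. a strong semantics whose truth-relation is the intersection of a family of mixed truth-relations |≡_{D_p^λ,D_c^λ} with D_c^λ ⊆ D_p^λ for every λ. -/

import Mathlib

universe u v w x

/-- Mixed truth-relation. -/
def Mixed {V : Type*} (Dp Dc : Set V) (γ δ : Set V) : Prop :=
  γ ⊆ Dp → (δ ∩ Dc).Nonempty

def Monotonic {L : Type*} (Cons : Set L → Set L → Prop) : Prop :=
  ∀ ⦃Γ₁ Γ₂ Δ₁ Δ₂ : Set L⦄, Γ₁ ⊆ Γ₂ → Δ₁ ⊆ Δ₂ → Cons Γ₁ Δ₁ → Cons Γ₂ Δ₂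

def ReflRel {L : Type*} (Cons : Set L → Set L → Prop) : Prop :=
  ∀ F : L, Cons {F} {F}

def TransRel {L : Type*} (Cons : Set L → Set L → Prop) : Prop :=
  ∀ Γ Δ : Set L, ¬ Cons Γ Δ →
    ∃ Γ' Δ' : Set L, Γ ⊆ Γ' ∧ Δ ⊆ Δ' ∧ ¬ Cons Γ' Δ' ∧ Γ' ∪ Δ' = Set.univ

def LRPermeable {L : Type*} (Cons : Set L → Set L → Prop) : Prop :=
  ∀ Γ Δ S : Set L, Cons (Γ ∪ S) Δ → Cons Γ (S ∪ Δ)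

def RLPermeable {L : Type*} (Cons : Set L → Set L → Prop) : Prop :=
  ∀ Γ Δ S : Set L, Cons Γ (S ∪ Δ) → Cons (Γ ∪ S) Δ

def Permeable {L : Type*} (Cons : Set L → Set L → Prop) : Prop :=
  LRPermeable Cons ∨ RLPermeable Cons

def CompactRel {L : Type*} (Cons : Set L → Set L → Prop) : Prop :=
  ∀ Γ Δ : Set L, Cons Γ Δ →
    ∃ Γ' Δ' : Set L, Γ' ⊆ Γ ∧ Δ' ⊆ Δ ∧ Γ'.Finite ∧ Δ'.Finite ∧ Cons Γ' Δ'

/-- Sound and complete intersective mixed semantics. -/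
def IsIMS {L V W Λ : Type*} (Cons : Set L → Set L → Prop)
    (interp : L → W → V) (Dp Dc : Λ → Set V) : Prop :=
  ∀ Γ Δ : Set L, Cons Γ Δ ↔
    ∀ (w : W) (l : Λ), Mixed (Dp l) (Dc l)
      ((fun F => interp F w) '' Γ) ((fun F => interp F w) '' Δ)

/-- Sound and complete mixed semantics (single pair). -/
def IsMixedSem {L V W : Type*} (Cons : Set L → Set L → Prop)
    (interp : L → W → V) (Dp Dc : Set V) : Prop :=
  ∀ Γ Δ : Set L, Cons Γ Δ ↔
    ∀ w : W, Mixed Dp Dc ((fun F => interp F w) '' Γ) ((fun F => interp F w) '' Δ)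

/-- Formulae of a sentential language. -/
inductive Formula (A : Type u) (C : Type u) (ar : C → ℕ) : Type u
  | atom : A → Formula A C ar
  | conn : (c : C) → (Fin (ar c) → Formula A C ar) → Formula A C ar

/-- Substitution induced by a map from atoms to formulae. -/
def Formula.subst {A C : Type u} {ar : C → ℕ} (σ : A → Formula A C ar) :
    Formula A C ar → Formula A C ar
  | .atom a => σ a
  | .conn c Fs => .conn c (fun i => (Fs i).subst σ)

def SubstInvariant {A C : Type u} {ar : C → ℕ}
    (Cons : Set (Formula A C ar) → Set (Formula A C ar) → Prop) : Prop :=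
  ∀ (σ : A → Formula A C ar) (Γ Δ : Set (Formula A C ar)),
    Cons Γ Δ → Cons (Formula.subst σ '' Γ) (Formula.subst σ '' Δ)

/-- Evaluation of formulae from truth-functions and a valuation. -/
def evalF {A C : Type u} {ar : C → ℕ} {V : Type v}
    (tf : (c : C) → (Fin (ar c) → V) → V) (v : A → V) : Formula A C ar → V
  | .atom a => v a
  | .conn c Fs => tf c (fun i => evalF tf v (Fs i))

/-- Truth-functionality of an interpretation w.r.t. truth-functions. -/
def Compositional {A C : Type u} {ar : C → ℕ} {V : Type v} {W : Type w}
    (interp : Formula A C ar → W → V)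
    (tf : (c : C) → (Fin (ar c) → V) → V) : Prop :=
  ∀ (c : C) (Fs : Fin (ar c) → Formula A C ar) (w : W),
    interp (Formula.conn c Fs) w = tf c (fun i => interp (Fs i) w)

/-- Regular connectives. -/
def RegularRel {A C : Type u} {ar : C → ℕ}
    (Cons : Set (Formula A C ar) → Set (Formula A C ar) → Prop) : Prop :=
  ∀ c : C, ∃ Bp Bc : Set (Set (Fin (ar c)) × Set (Fin (ar c))),
    ∀ (Γ Δ : Set (Formula A C ar)) (Fs : Fin (ar c) → Formula A C ar),
      (Cons (Γ ∪ {Formula.conn c Fs}) Δ ↔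
        ∀ B ∈ Bp, Cons (Γ ∪ Fs '' B.1) (Fs '' B.2 ∪ Δ)) ∧
      (Cons Γ ({Formula.conn c Fs} ∪ Δ) ↔
        ∀ B ∈ Bc, Cons (Γ ∪ Fs '' B.1) (Fs '' B.2 ∪ Δ))

lemma evalF_conn_eq_subst {A C : Type u} {ar : C → ℕ} (v : A → Formula A C ar)
    (F : Formula A C ar) :
    evalF (fun c Fs => Formula.conn c Fs) v F = Formula.subst v F := by
  induction F with
  | atom a => rfl
  | conn c Fs ih => simp [evalF, Formula.subst, ih]

lemma evalF_subst_comp {A C : Type u} {ar : C → ℕ} {V : Type v}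
    (tf : (c : C) → (Fin (ar c) → V) → V) (v : A → V)
    (σ : A → Formula A C ar) (F : Formula A C ar) :
    evalF tf v (Formula.subst σ F) = evalF tf (fun a => evalF tf v (σ a)) F := by
  induction F with
  | atom a => rfl
  | conn c Fs ih => simp [evalF, Formula.subst, ih]

/-- substitution-invariance + monotonicity + transitivity is
equivalent to the existence of a strong intersective q-mixed semantics. -/
theorem statement_6 {A C : Type u} (ar : C → ℕ)
    (Cons : Set (Formula A C ar) → Set (Formula A C ar) → Prop) :
    (SubstInvariant Cons ∧ Monotonic Cons ∧ TransRel Cons) ↔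
      ∃ (V : Type u) (tf : (c : C) → (Fin (ar c) → V) → V)
        (Λ : Type u) (Dp Dc : Λ → Set V),
        (∀ l : Λ, Dc l ⊆ Dp l) ∧
        ∀ Γ Δ : Set (Formula A C ar), Cons Γ Δ ↔
          ∀ (v : A → V) (l : Λ),
            Mixed (Dp l) (Dc l)
              ((fun F => evalF tf v F) '' Γ) ((fun F => evalF tf v F) '' Δ) := by
  constructor
  · rintro ⟨hsub, hmono, htrans⟩
    refine ⟨Formula A C ar, fun c Fs => Formula.conn c Fs,
      {p : Set (Formula A C ar) × Set (Formula A C ar) //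
        ¬ Cons p.1 p.2 ∧ p.1 ∪ p.2 = Set.univ},
      fun l => l.1.1, fun l => (l.1.2)ᶜ, ?_, ?_⟩
    · rintro ⟨⟨Γ', Δ'⟩, hnc, huniv⟩ x hx
      by_contra hx'
      have : x ∈ Γ' ∪ Δ' := huniv ▸ Set.mem_univ x
      exact hx (this.resolve_left hx')
    · intro Γ Δ
      constructor
      · intro h v l hsubp
        obtain ⟨⟨Γ', Δ'⟩, hnc, huniv⟩ := l
        by_contra hemp
        rw [Set.not_nonempty_iff_eq_empty] at hemp
        apply hnc
        refine hmono (Γ₁ := Formula.subst v '' Γ) (Δ₁ := Formula.subst v '' Δ)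
          ?_ ?_ (hsub v Γ Δ h)
        · intro x hx
          obtain ⟨F, hF, rfl⟩ := hx
          have := hsubp ⟨F, hF, rfl⟩
          simpa only [evalF_conn_eq_subst] using this
        · intro x hx
          obtain ⟨F, hF, rfl⟩ := hx
          by_contra hx'
          have : Formula.subst v F ∈
              ((fun F => evalF (fun c Fs => Formula.conn c Fs) v F) '' Δ) ∩ Δ'ᶜ := by
            refine ⟨⟨F, hF, ?_⟩, hx'⟩
            exact evalF_conn_eq_subst v F
          rw [hemp] at this
          exact this
      · intro h
        by_contra hnc
        obtain ⟨Γ', Δ', hΓ, hΔ, hnc', huniv⟩ := htrans Γ Δ hnc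
        have := h (fun a => Formula.atom a) ⟨⟨Γ', Δ'⟩, hnc', huniv⟩
        simp only at this
        have key : ∀ F : Formula A C ar,
            evalF (fun c Fs => Formula.conn c Fs) (fun a => Formula.atom a) F = F := by
          intro F
          rw [evalF_conn_eq_subst]
          induction F with
          | atom a => rfl
          | conn c Fs ih => simp [Formula.subst, ih]
        have hp : (fun F => evalF (fun c Fs => Formula.conn c Fs)
            (fun a => Formula.atom a) F) '' Γ ⊆ Γ' := by
          rintro x ⟨F, hF, rfl⟩
          simp only [key]; exact hΓ hF
        obtain ⟨x, ⟨F, hF, rfl⟩, hxc⟩ := this hp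
        simp only [key] at hxc
        exact hxc (hΔ hF)
  · rintro ⟨V, tf, Λ, Dp, Dc, hDcp, hsem⟩
    refine ⟨?_, ?_, ?_⟩
    · intro σ Γ Δ h
      rw [hsem] at h ⊢
      intro v l hsubp
      have := h (fun a => evalF tf v (σ a)) l (by
        rintro x ⟨F, hF, rfl⟩
        have : evalF tf v (Formula.subst σ F) ∈ Dp l :=
          hsubp ⟨Formula.subst σ F, ⟨F, hF, rfl⟩, rfl⟩
        rwa [evalF_subst_comp] at this)
      obtain ⟨x, ⟨F, hF, rfl⟩, hxc⟩ := this
      exact ⟨evalF tf v (Formula.subst σ F), ⟨Formula.subst σ F, ⟨F, hF, rfl⟩, rfl⟩,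
        by rw [evalF_subst_comp]; exact hxc⟩
    · intro Γ₁ Γ₂ Δ₁ Δ₂ hΓ hΔ h
      rw [hsem] at h ⊢
      intro v l hsubp
      obtain ⟨x, hx, hxc⟩ := h v l (fun x hx => hsubp (Set.image_mono hΓ hx))
      exact ⟨x, Set.image_mono hΔ hx, hxc⟩
    · intro Γ Δ hnc
      rw [hsem] at hnc
      push_neg at hnc
      obtain ⟨v, l, hfail⟩ := hnc
      rw [Mixed] at hfail
      push_neg at hfail
      obtain ⟨hsubp, hemp⟩ := hfail
      rw [← Set.not_nonempty_iff_eq_empty] at hemp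
      refine ⟨{F | evalF tf v F ∈ Dp l}, {F | evalF tf v F ∉ Dc l}, ?_, ?_, ?_, ?_⟩
      · intro F hF; exact hsubp ⟨F, hF, rfl⟩
      · intro F hF hc
        have : evalF tf v F ∈ ((fun F => evalF tf v F) '' Δ) ∩ Dc l :=
          ⟨⟨F, hF, rfl⟩, hc⟩
        exact hemp ⟨_, this⟩
      · intro h
        rw [hsem] at h
        obtain ⟨x, ⟨F, hF, rfl⟩, hxc⟩ := h v l (by rintro x ⟨F, hF, rfl⟩; exact hF)
        exact hF hxc
      · ext F
        simp only [Set.mem_union, Set.mem_setOf_eq, Set.mem_univ, iff_true]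
        by_cases h : evalF tf v F ∈ Dp l
        · exact Or.inl h
        · exact Or.inr (fun hc => h (hDcp l hc))
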